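/- arXiv:1601.00080 — 4 statements merged into one kernel-verified Lean document; each statement's English description precedes it below -/
import Mathlib

section
/- Let n > k ≥ l ≥ 1 be integers and a_{n-1},…,a_l nonnegative reals with a_l > 0. Suppose N is an m×m matrix with strictly positive entries satisfying N^n + a_{n-1}N^{n-1} + … + a_{k+1}N^{k+1} = a_k N^k + … + a_l N^l. Suppose X is an m×m matrix with nonnegative entries such that the block matrix M = [[N, X],[0, N]] satisfies the same polynomial identity M^n + a_{n-1}M^{n-1} + … + a_{k+1}M^{k+1} = a_k M^k + … + a_l M^l. Then X = 0. -/
open Matrix Finset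

private def Dseq {m : ℕ} (N X : Matrix (Fin m) (Fin m) ℝ) : ℕ → Matrix (Fin m) (Fin m) ℝ
  | 0 => 0
  | (i + 1) => N * Dseq N X i + X * N ^ i

private lemma fromBlocks_pow {m : ℕ} (N X : Matrix (Fin m) (Fin m) ℝ) (i : ℕ) :
    (Matrix.fromBlocks N X 0 N : Matrix (Fin m ⊕ Fin m) (Fin m ⊕ Fin m) ℝ) ^ i
      = Matrix.fromBlocks (N ^ i) (Dseq N X i) 0 (N ^ i) := by
  induction i with
  | zero => simp [Dseq]
  | succ i ih =>
      rw [pow_succ', ih, Matrix.fromBlocks_multiply]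
      simp [Dseq, pow_succ']

private lemma trace_Dseq {m : ℕ} (N X : Matrix (Fin m) (Fin m) ℝ) (i j : ℕ) :
    (N ^ (j + 1) * Dseq N X i).trace = (i : ℝ) * (N ^ (i + j) * X).trace := by
  induction i generalizing j with
  | zero => simp [Dseq]
  | succ i ih =>
      have h1 : N ^ (j + 1) * (N * Dseq N X i) = N ^ (j + 1 + 1) * Dseq N X i := by
        rw [← Matrix.mul_assoc, ← pow_succ]
      have h2 : (N ^ (j + 1) * (X * N ^ i)).trace = (N ^ (i + 1 + j) * X).trace := by
        rw [Matrix.trace_mul_comm, Matrix.mul_assoc, ← pow_add, Matrix.trace_mul_comm]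
        ring_nf
      rw [show Dseq N X (i + 1) = N * Dseq N X i + X * N ^ i from rfl, Matrix.mul_add,
        Matrix.trace_add, h1, h2, ih (j + 1)]
      push_cast
      ring_nf

private lemma tb12_sum {m : ℕ} {ι : Type*} (s : Finset ι)
    (f : ι → Matrix (Fin m ⊕ Fin m) (Fin m ⊕ Fin m) ℝ) :
    (∑ i ∈ s, f i).toBlocks₁₂ = ∑ i ∈ s, (f i).toBlocks₁₂ := by
  ext p q
  simp [Matrix.toBlocks₁₂, Matrix.sum_apply]

private lemma tb12_add {m : ℕ} (A B : Matrix (Fin m ⊕ Fin m) (Fin m ⊕ Fin m) ℝ) :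
    (A + B).toBlocks₁₂ = A.toBlocks₁₂ + B.toBlocks₁₂ := rfl

private lemma tb12_smul {m : ℕ} (r : ℝ) (A : Matrix (Fin m ⊕ Fin m) (Fin m ⊕ Fin m) ℝ) :
    (r • A).toBlocks₁₂ = r • A.toBlocks₁₂ := rfl

theorem stmt_2 {m : ℕ} (n k l : ℕ) (hkn : k < n) (hlk : l ≤ k) (hl : 1 ≤ l)
    (a : ℕ → ℝ) (ha : ∀ i, 0 ≤ a i) (hal : 0 < a l)
    (N : Matrix (Fin m) (Fin m) ℝ) (hN : ∀ i j, 0 < N i j)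
    (X : Matrix (Fin m) (Fin m) ℝ) (hX : ∀ i j, 0 ≤ X i j)
    (hNeq : N ^ n + ∑ i ∈ Finset.Icc (k + 1) (n - 1), a i • N ^ i =
      ∑ i ∈ Finset.Icc l k, a i • N ^ i)
    (hMeq :
      (Matrix.fromBlocks N X 0 N : Matrix (Fin m ⊕ Fin m) (Fin m ⊕ Fin m) ℝ) ^ n +
          ∑ i ∈ Finset.Icc (k + 1) (n - 1),
            a i • (Matrix.fromBlocks N X 0 N : Matrix (Fin m ⊕ Fin m) (Fin m ⊕ Fin m) ℝ) ^ i =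
        ∑ i ∈ Finset.Icc l k,
          a i • (Matrix.fromBlocks N X 0 N : Matrix (Fin m ⊕ Fin m) (Fin m ⊕ Fin m) ℝ) ^ i) :
    X = 0 := by
  -- strict positivity of powers of N
  have hNpos : ∀ s (p q : Fin m), 0 < (N ^ (s + 1)) p q := by
    intro s
    induction s with
    | zero => simpa using hN
    | succ s ih =>
        intro p q
        rw [pow_succ, Matrix.mul_apply]
        exact Finset.sum_pos (fun r _ => mul_pos (ih p r) (hN r q)) ⟨p, Finset.mem_univ p⟩
  set H : ℕ → ℝ := fun i => (N ^ (i + 1) * X).trace with hH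
  have hHnonneg : ∀ i, 0 ≤ H i := by
    intro i
    refine Finset.sum_nonneg fun p _ => ?_
    rw [Matrix.diag_apply, Matrix.mul_apply]
    exact Finset.sum_nonneg fun q _ => mul_nonneg (hNpos i p q).le (hX q p)
  -- Equation (1): from hNeq
  have e1 : H n + ∑ i ∈ Finset.Icc (k + 1) (n - 1), a i * H i
      = ∑ i ∈ Finset.Icc l k, a i * H i := by
    have h := congrArg (fun A => (N * A * X).trace) hNeq
    simp only [Matrix.add_mul, Matrix.mul_add, Matrix.mul_sum, Matrix.sum_mul,
      Matrix.mul_smul, Matrix.smul_mul, Matrix.trace_add, Matrix.trace_sum,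
      Matrix.trace_smul, smul_eq_mul] at h
    have hp : ∀ i : ℕ, (N * N ^ i * X).trace = H i := by
      intro i; rw [← pow_succ']
    simpa only [hp] using h
  -- Equation (2): from top-right block of hMeq
  have hDeq : Dseq N X n + ∑ i ∈ Finset.Icc (k + 1) (n - 1), a i • Dseq N X i
      = ∑ i ∈ Finset.Icc l k, a i • Dseq N X i := by
    have h := congrArg Matrix.toBlocks₁₂ hMeq
    simp only [fromBlocks_pow, tb12_add, tb12_sum, tb12_smul,
      Matrix.toBlocks_fromBlocks₁₂] at h
    exact h
  have e2 : (n : ℝ) * H n + ∑ i ∈ Finset.Icc (k + 1) (n - 1), a i * ((i : ℝ) * H i)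
      = ∑ i ∈ Finset.Icc l k, a i * ((i : ℝ) * H i) := by
    have h := congrArg (fun A => (N ^ (1 + 1) * A).trace) hDeq
    simp only [Matrix.mul_add, Matrix.mul_sum, Matrix.mul_smul, Matrix.trace_add,
      Matrix.trace_sum, Matrix.trace_smul, smul_eq_mul, trace_Dseq, add_zero,
      zero_add] at h
    exact h
  -- conclude H n = 0
  have hHn : H n = 0 := by
    have hlowb : ∑ i ∈ Finset.Icc l k, a i * ((i : ℝ) * H i)
        ≤ (k : ℝ) * ∑ i ∈ Finset.Icc l k, a i * H i := by
      rw [Finset.mul_sum]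
      refine Finset.sum_le_sum fun i hi => ?_
      have hik : (i : ℝ) ≤ k := by exact_mod_cast (Finset.mem_Icc.mp hi).2
      have h0 : 0 ≤ a i * H i := mul_nonneg (ha i) (hHnonneg i)
      calc a i * ((i : ℝ) * H i) = (i : ℝ) * (a i * H i) := by ring
        _ ≤ (k : ℝ) * (a i * H i) := mul_le_mul_of_nonneg_right hik h0
    have hhighb : (k : ℝ) * ∑ i ∈ Finset.Icc (k + 1) (n - 1), a i * H i
        ≤ ∑ i ∈ Finset.Icc (k + 1) (n - 1), a i * ((i : ℝ) * H i) := by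
      rw [Finset.mul_sum]
      refine Finset.sum_le_sum fun i hi => ?_
      have hik : (k : ℝ) ≤ i := by
        have := (Finset.mem_Icc.mp hi).1
        exact_mod_cast le_trans (Nat.le_succ k) this
      have h0 : 0 ≤ a i * H i := mul_nonneg (ha i) (hHnonneg i)
      calc (k : ℝ) * (a i * H i) ≤ (i : ℝ) * (a i * H i) :=
            mul_le_mul_of_nonneg_right hik h0
        _ = a i * ((i : ℝ) * H i) := by ring
    have hkn' : (k : ℝ) < n := by exact_mod_cast hkn
    nlinarith [hHnonneg n, e1, e2]
  -- conclude X = 0 from H n = 0 and strict positivity of N ^ (n+1)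
  ext q p
  by_contra hne
  have hxqp : 0 < X q p := (hX q p).lt_of_ne (by simpa using Ne.symm hne)
  have h1 : 0 < (N ^ (n + 1) * X).diag p := by
    rw [Matrix.diag_apply, Matrix.mul_apply]
    exact Finset.sum_pos'
      (fun r _ => mul_nonneg (hNpos n p r).le (hX r p))
      ⟨q, Finset.mem_univ q, mul_pos (hNpos n p q) hxqp⟩
  have h2 : 0 < H n := by
    refine Finset.sum_pos' (fun r _ => ?_) ⟨p, Finset.mem_univ p, h1⟩
    rw [Matrix.diag_apply, Matrix.mul_apply]
    exact Finset.sum_nonneg fun s _ => mul_nonneg (hNpos n r s).le (hX s r)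
  linarith
end

section
/- Let C = ℂ[x,y,z]/(x+y+z, xy+xz+yz, xyz) and let a, b ∈ ℂ satisfy a² − ab + b² = 0 with a ≠ 0 and b ≠ 0. Then the quotient M = C/(ax+by) is a 3-dimensional ℂ-vector space, with basis given by the images of 1, x, x². -/
open MvPolynomial

/-- The ideal of `ℂ[x,y,z]` generated by the elementary symmetric polynomials. -/
noncomputable abbrev coinvIdeal : Ideal (MvPolynomial (Fin 3) ℂ) :=
  Ideal.span {X 0 + X 1 + X 2, X 0 * X 1 + X 0 * X 2 + X 1 * X 2, X 0 * X 1 * X 2}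

/-- The coinvariant algebra `C = ℂ[x,y,z]/(x+y+z, xy+xz+yz, xyz)` of `S₃`. -/
abbrev Coinv : Type := MvPolynomial (Fin 3) ℂ ⧸ coinvIdeal

noncomputable abbrev cmk : MvPolynomial (Fin 3) ℂ →+* Coinv := Ideal.Quotient.mk coinvIdeal


/-- The quotient `M_{a,b} = C/(ax+by)`. -/
abbrev Mquot (a b : ℂ) : Type :=
  Coinv ⧸ Ideal.span {a • cmk (X 0) + b • cmk (X 1)}

noncomputable abbrev mmk (a b : ℂ) : Coinv →+* Mquot a b :=
  Ideal.Quotient.mk (Ideal.span {a • cmk (X 0) + b • cmk (X 1)})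

noncomputable abbrev Atrunc : Type := AdjoinRoot (Polynomial.X ^ 3 : Polynomial ℂ)

noncomputable abbrev rtr : Atrunc := AdjoinRoot.root _

lemma rtr_cube : rtr ^ 3 = 0 := by
  rw [show rtr = AdjoinRoot.mk _ Polynomial.X from rfl, ← map_pow, AdjoinRoot.mk_self]

set_option maxHeartbeats 2000000 in
set_option synthInstance.maxHeartbeats 400000 in
/-- If `a² − ab + b² = 0` with `a,b ≠ 0`, then `C/(ax+by)` is a 3-dimensional `ℂ`-vector
space with basis the images of `1, x, x²`. -/
theorem stmt_12 (a b : ℂ) (h : a ^ 2 - a * b + b ^ 2 = 0) (ha : a ≠ 0) (hb : b ≠ 0) :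
    Module.finrank ℂ (Mquot a b) = 3 ∧
    LinearIndependent ℂ
      ![(1 : Mquot a b), mmk a b (cmk (X 0)), mmk a b (cmk (X 0 ^ 2))] ∧
    Submodule.span ℂ
        (Set.range ![(1 : Mquot a b), mmk a b (cmk (X 0)), mmk a b (cmk (X 0 ^ 2))]) =
      ⊤ := by
  classical
  set c : ℂ := -a / b with hc_def
  have hc : c ^ 2 + c + 1 = 0 := by
    rw [hc_def]
    field_simp
    linear_combination h
  set d : ℂ := -(1 + c) with hd_def
  have hcd1 : c * d = 1 := by rw [hd_def]; linear_combination -hc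
  -- the algebra map to the truncated polynomial ring
  set φ : MvPolynomial (Fin 3) ℂ →ₐ[ℂ] Atrunc := aeval ![rtr, c • rtr, d • rtr] with hφ
  have hφ0 : φ (X 0) = rtr := by simp [hφ]
  have hφ1 : φ (X 1) = c • rtr := by simp [hφ]
  have hφ2 : φ (X 2) = d • rtr := by simp [hφ]
  have hker : ∀ p ∈ coinvIdeal, φ p = 0 := by
    intro p hp
    have hsub : ({X 0 + X 1 + X 2, X 0 * X 1 + X 0 * X 2 + X 1 * X 2, X 0 * X 1 * X 2} :
        Set (MvPolynomial (Fin 3) ℂ)) ⊆ ↑(RingHom.ker φ.toRingHom) := by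
      intro q hq
      simp only [Set.mem_insert_iff, Set.mem_singleton_iff] at hq
      rcases hq with rfl | rfl | rfl <;>
        · simp only [SetLike.mem_coe, RingHom.mem_ker, AlgHom.toRingHom_eq_coe,
            RingHom.coe_coe, map_add, map_mul, hφ0, hφ1, hφ2, Algebra.smul_def]
          have hr3 := rtr_cube
          first
          | (have hc' : algebraMap ℂ Atrunc (1 + c + d) = 0 := by
              rw [show (1 : ℂ) + c + d = 0 by rw [hd_def]; ring, map_zero]
             rw [map_add, map_add, map_one] at hc'
             linear_combination rtr * hc')
          | (have hc' : algebraMap ℂ Atrunc (c + d + c * d) = 0 := by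
              rw [show c + d + c * d = 0 by rw [hd_def]; linear_combination -hc, map_zero]
             rw [map_add, map_add, map_mul] at hc'
             linear_combination rtr ^ 2 * hc')
          | (linear_combination (algebraMap ℂ Atrunc c * algebraMap ℂ Atrunc d) * rtr_cube)
    have : coinvIdeal ≤ RingHom.ker φ.toRingHom := Ideal.span_le.mpr hsub
    exact this hp
  set φ1 : Coinv →ₐ[ℂ] Atrunc := Ideal.Quotient.liftₐ coinvIdeal φ hker with hφ1def
  have hφ1mk : ∀ p, φ1 (cmk p) = φ p := fun p => by
    rw [hφ1def, Ideal.Quotient.liftₐ_apply]; rfl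
  have hgen0 : φ1 (a • cmk (X 0) + b • cmk (X 1)) = 0 := by
    rw [map_add, map_smul, map_smul, hφ1mk, hφ1mk, hφ0, hφ1, smul_smul,
      show a • rtr + (b * c) • rtr = (a + b * c) • rtr by rw [add_smul],
      show a + b * c = 0 by rw [hc_def]; field_simp; ring, zero_smul]
  have hker2 : ∀ q ∈ Ideal.span {a • cmk (X 0) + b • cmk (X 1)}, φ1 q = 0 := by
    intro q hq
    rw [Ideal.mem_span_singleton] at hq
    obtain ⟨r, rfl⟩ := hq
    rw [map_mul, hgen0, zero_mul]
  set φ2 : Mquot a b →ₐ[ℂ] Atrunc := Ideal.Quotient.liftₐ _ φ1 hker2 with hφ2def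
  have hφ2mk : ∀ q, φ2 (mmk a b q) = φ1 q := fun q => by
    rw [hφ2def, Ideal.Quotient.liftₐ_apply]; rfl
  -- notation in Mquot
  set u : Mquot a b := mmk a b (cmk (X 0)) with hu_def
  set v : Mquot a b := mmk a b (cmk (X 1)) with hv_def
  set w : Mquot a b := mmk a b (cmk (X 2)) with hw_def
  have hmem : ∀ p ∈ ({X 0 + X 1 + X 2, X 0 * X 1 + X 0 * X 2 + X 1 * X 2,
      X 0 * X 1 * X 2} : Set (MvPolynomial (Fin 3) ℂ)), mmk a b (cmk p) = 0 := by
    intro p hp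
    rw [show cmk p = 0 from Ideal.Quotient.eq_zero_iff_mem.mpr (Ideal.subset_span hp)]
    exact RingHom.map_zero _
  have h1 : u + v + w = 0 := by
    rw [hu_def, hv_def, hw_def, ← map_add, ← map_add, ← map_add, ← map_add]
    exact hmem _ (by left; rfl)
  have h3q : u * v * w = 0 := by
    rw [hu_def, hv_def, hw_def, ← map_mul, ← map_mul, ← map_mul, ← map_mul]
    exact hmem _ (by right; right; rfl)
  set μ : Coinv →ₐ[ℂ] Mquot a b :=
    Ideal.Quotient.mkₐ ℂ (Ideal.span {a • cmk (X 0) + b • cmk (X 1)}) with hμdef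
  have hμ : ∀ x : Coinv, μ x = mmk a b x := fun x => rfl
  have h4 : a • u + b • v = 0 := by
    have hm : (a • cmk (X 0) + b • cmk (X 1) : Coinv) ∈
        Ideal.span {a • cmk (X 0) + b • cmk (X 1)} := Ideal.subset_span rfl
    have h0 : μ (a • cmk (X 0) + b • cmk (X 1)) = 0 := by
      rw [hμ]; exact Ideal.Quotient.eq_zero_iff_mem.mpr hm
    rw [map_add, map_smul, map_smul, hμ, hμ] at h0
    rw [hu_def, hv_def]
    exact h0
  have hv2 : v = c • u := by
    have hbv : b • v = -(a • u) := by
      rw [← eq_neg_of_add_eq_zero_right h4]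
    calc v = (b⁻¹ * b) • v := by rw [inv_mul_cancel₀ hb, one_smul]
      _ = b⁻¹ • (b • v) := by rw [mul_smul]
      _ = b⁻¹ • (-(a • u)) := by rw [hbv]
      _ = c • u := by rw [smul_neg, smul_smul, hc_def, neg_div, neg_smul, div_eq_inv_mul]
  have hw2 : w = d • u := by
    have : w = -u - v := by linear_combination h1
    rw [this, hv2, hd_def]
    module
  have hu3 : u ^ 3 = 0 := by
    have key : u ^ 3 = u * v * w := by
      rw [hv2, hw2]
      rw [mul_smul_comm, mul_smul_comm, smul_mul_assoc, smul_smul, mul_comm d c, hcd1, one_smul]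
      ring
    rw [key, h3q]
  -- the inverse map
  have huroot : (Polynomial.aeval u) (Polynomial.X ^ 3 : Polynomial ℂ) = 0 := by
    rw [map_pow, Polynomial.aeval_X, hu3]
  set ψ : Atrunc →ₐ[ℂ] Mquot a b := AdjoinRoot.liftAlgHom _ (Algebra.ofId ℂ _) u huroot with hψdef
  have hψr : ψ rtr = u := by
    rw [hψdef]
    exact AdjoinRoot.liftAlgHom_root _ _ _ _
  have eqn1 : φ2.comp ψ = AlgHom.id ℂ Atrunc := by
    apply AdjoinRoot.algHom_ext
    rw [AlgHom.comp_apply, AlgHom.id_apply]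
    show φ2 (ψ rtr) = rtr
    rw [hψr, hu_def, hφ2mk, hφ1mk, hφ0]
  have eqn2 : ψ.comp φ2 = AlgHom.id ℂ (Mquot a b) := by
    set π : MvPolynomial (Fin 3) ℂ →ₐ[ℂ] Mquot a b :=
      μ.comp (Ideal.Quotient.mkₐ ℂ coinvIdeal) with hπdef
    have hmkp : ∀ p : MvPolynomial (Fin 3) ℂ, π p = mmk a b (cmk p) := fun p => rfl
    have hsurj : Function.Surjective π := by
      rw [hπdef]
      exact (Ideal.Quotient.mkₐ_surjective ℂ _).comp (Ideal.Quotient.mkₐ_surjective ℂ _)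
    have hcomp : (ψ.comp φ2).comp π = π := by
      apply MvPolynomial.algHom_ext
      intro i
      rw [AlgHom.comp_apply, hmkp]
      fin_cases i
      · show ψ (φ2 u) = u
        rw [hu_def, hφ2mk, hφ1mk, hφ0, hψr]
      · show ψ (φ2 v) = v
        rw [hv_def, hφ2mk, hφ1mk, hφ1, map_smul, hψr, ← hv2]
      · show ψ (φ2 w) = w
        rw [hw_def, hφ2mk, hφ1mk, hφ2, map_smul, hψr, ← hw2]
    ext x
    obtain ⟨p, rfl⟩ := hsurj x
    have := congrArg (fun f => (f : MvPolynomial (Fin 3) ℂ →ₐ[ℂ] Mquot a b) p) hcomp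
    simpa using this
  set e : Mquot a b ≃ₐ[ℂ] Atrunc := AlgEquiv.ofAlgHom φ2 ψ eqn1 eqn2 with hedef
  have hesymm : ∀ x, e.symm x = ψ x := fun x => rfl
  -- power basis
  have hmonic : (Polynomial.X ^ 3 : Polynomial ℂ).Monic := Polynomial.monic_X.pow 3
  set pb : PowerBasis ℂ Atrunc := AdjoinRoot.powerBasis' hmonic with hpbdef
  have hdim : pb.dim = 3 := by
    simp [hpbdef, AdjoinRoot.powerBasis', Polynomial.natDegree_X_pow]
  have hgen : pb.gen = rtr := rfl
  -- the basis of Mquot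
  set B : Module.Basis (Fin 3) ℂ (Mquot a b) :=
    ((pb.basis.map e.symm.toLinearEquiv).reindex (finCongr hdim)) with hBdef
  have hB : ∀ i : Fin 3, B i = u ^ (i : ℕ) := by
    intro i
    rw [hBdef, Module.Basis.reindex_apply, Module.Basis.map_apply, pb.basis_eq_pow,
      AlgEquiv.toLinearEquiv_apply, hesymm, map_pow, hgen, hψr]
    simp
  have hq2 : mmk a b (cmk (X 0 ^ 2)) = u ^ 2 := by
    rw [hu_def, ← map_pow, ← map_pow]
  have hBeq : ![(1 : Mquot a b), u, mmk a b (cmk (X 0 ^ 2))] = ⇑B := by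
    funext i
    rw [hB i]
    fin_cases i <;> simp [hq2, hu_def]
  refine ⟨?_, ?_, ?_⟩
  · rw [Module.finrank_eq_card_basis B, Fintype.card_fin]
  · rw [hBeq]; exact B.linearIndependent
  · rw [hBeq]; exact B.span_eq
end

section
/- Let C = ℂ[x,y,z]/(x+y+z, xy+xz+yz, xyz) and let a, b ∈ ℂ satisfy a² − ab + b² = 0 with a ≠ 0, b ≠ 0. Then the quotient algebra C/(ax+by) is isomorphic, as a ℂ-algebra, to ℂ[q]/(q³), with the image of x corresponding to q. -/
open MvPolynomial

set_option maxHeartbeats 1000000 in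
set_option synthInstance.maxHeartbeats 400000 in
/-- If `a² − ab + b² = 0` with `a,b ≠ 0`, then `C/(ax+by) ≅ ℂ[q]/(q³)` as `ℂ`-algebras,
with the image of `x` corresponding to `q`. -/
theorem stmt_13 (a b : ℂ) (h : a ^ 2 - a * b + b ^ 2 = 0) (ha : a ≠ 0) (hb : b ≠ 0) :
    ∃ φ : Mquot a b ≃ₐ[ℂ] (Polynomial ℂ ⧸ Ideal.span {(Polynomial.X : Polynomial ℂ) ^ 3}),
      φ (mmk a b (cmk (X 0))) =
        Ideal.Quotient.mk (Ideal.span {(Polynomial.X : Polynomial ℂ) ^ 3}) Polynomial.X := by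
  set J : Ideal (Polynomial ℂ) := Ideal.span {(Polynomial.X : Polynomial ℂ) ^ 3} with hJ
  set t : ℂ := -a / b with htdef
  have hbt : a + b * t = 0 := by rw [htdef, mul_div_assoc', mul_comm, mul_div_assoc, div_self hb]; ring
  have ht2 : 1 + t + t ^ 2 = 0 := by
    have e : b ^ 2 * (1 + t + t ^ 2) = 0 := by
      linear_combination (b * t - a + b) * hbt + h
    rcases mul_eq_zero.mp e with h' | h'
    · exact absurd h' (pow_ne_zero 2 hb)
    · exact h'
  have hCt : (1 : Polynomial ℂ) + Polynomial.C t + Polynomial.C t ^ 2 = 0 := by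
    have := congrArg Polynomial.C ht2
    simpa using this
  set F0 : MvPolynomial (Fin 3) ℂ →ₐ[ℂ] Polynomial ℂ :=
    aeval ![Polynomial.X, Polynomial.C t * Polynomial.X, Polynomial.C (-(1 + t)) * Polynomial.X]
    with hF0
  set F : MvPolynomial (Fin 3) ℂ →ₐ[ℂ] Polynomial ℂ ⧸ J :=
    (Ideal.Quotient.mkₐ ℂ J).comp F0 with hF
  have hX3 : (Polynomial.X : Polynomial ℂ) ^ 3 ∈ J := Ideal.subset_span rfl
  have hF01 : F0 (X 0 + X 1 + X 2) = 0 := by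
    simp only [hF0, map_add, aeval_X, Matrix.cons_val_zero, Matrix.cons_val_one,
      Matrix.head_cons, Matrix.cons_val_two, Matrix.tail_cons, map_neg, map_add, Polynomial.C_1]
    ring
  have hF02 : F0 (X 0 * X 1 + X 0 * X 2 + X 1 * X 2) = 0 := by
    simp only [hF0, map_add, map_mul, aeval_X, Matrix.cons_val_zero, Matrix.cons_val_one,
      Matrix.head_cons, Matrix.cons_val_two, Matrix.tail_cons, map_neg, map_add, Polynomial.C_1]
    linear_combination (-(Polynomial.X ^ 2)) * hCt
  have hF03 : F0 (X 0 * X 1 * X 2) = Polynomial.C t * Polynomial.C (-(1 + t)) * Polynomial.X ^ 3 := by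
    simp only [hF0, map_mul, aeval_X, Matrix.cons_val_zero, Matrix.cons_val_one,
      Matrix.head_cons, Matrix.cons_val_two, Matrix.tail_cons]
    ring
  have hker : coinvIdeal ≤ RingHom.ker F.toRingHom := by
    rw [Ideal.span_le]
    rintro p hp
    simp only [Set.mem_insert_iff, Set.mem_singleton_iff] at hp
    have key : ∀ q : MvPolynomial (Fin 3) ℂ, F q = Ideal.Quotient.mk J (F0 q) := fun q => rfl
    rcases hp with rfl | rfl | rfl
    · show F _ = 0
      rw [key, hF01, map_zero]
    · show F _ = 0
      rw [key, hF02, map_zero]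
    · show F _ = 0
      rw [key, hF03]
      exact Ideal.Quotient.eq_zero_iff_mem.mpr (Ideal.mul_mem_left _ _ hX3)
  set Flift : Coinv →ₐ[ℂ] Polynomial ℂ ⧸ J :=
    Ideal.Quotient.liftₐ coinvIdeal F (fun p hp => show F p = 0 from hker hp) with hFlift
  have hFlift_mk : ∀ p, Flift (cmk p) = F p := fun p => by
    rw [hFlift, Ideal.Quotient.liftₐ_apply]
    exact Ideal.Quotient.lift_mk coinvIdeal _ _
  have hgen : a • cmk (X 0) + b • cmk (X 1) = cmk (a • X 0 + b • X 1) := by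
    show a • (Ideal.Quotient.mkₐ ℂ coinvIdeal) (X 0) + b • (Ideal.Quotient.mkₐ ℂ coinvIdeal) (X 1)
        = (Ideal.Quotient.mkₐ ℂ coinvIdeal) (a • X 0 + b • X 1)
    rw [map_add, map_smul, map_smul]
  have hC0 : Polynomial.C a + Polynomial.C b * Polynomial.C t = 0 := by
    rw [← Polynomial.C_mul, ← Polynomial.C_add, hbt, Polynomial.C_0]
  have hFgen0 : F0 (a • X 0 + b • X 1) = 0 := by
    rw [map_add, map_smul, map_smul]
    simp only [hF0, aeval_X, Matrix.cons_val_zero, Matrix.cons_val_one, Matrix.head_cons]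
    rw [Polynomial.smul_eq_C_mul, Polynomial.smul_eq_C_mul]
    linear_combination Polynomial.X * hC0
  have hFgen : Flift (a • cmk (X 0) + b • cmk (X 1)) = 0 := by
    rw [hgen, hFlift_mk]
    show Ideal.Quotient.mk J (F0 (a • X 0 + b • X 1)) = 0
    rw [hFgen0, map_zero]
  set F2 : Mquot a b →ₐ[ℂ] Polynomial ℂ ⧸ J :=
    Ideal.Quotient.liftₐ _ Flift (by
      intro p hp
      rw [Ideal.mem_span_singleton] at hp
      obtain ⟨c, rfl⟩ := hp
      rw [map_mul, hFgen, zero_mul]) with hF2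
  have hF2_mk : ∀ p, F2 (mmk a b p) = Flift p := fun p => by
    rw [hF2, Ideal.Quotient.liftₐ_apply]
    exact Ideal.Quotient.lift_mk _ _ _
  set xbar : Mquot a b := mmk a b (cmk (X 0)) with hxbar
  have hX03 : (X 0 : MvPolynomial (Fin 3) ℂ) ^ 3 ∈ coinvIdeal := by
    have e : (X 0 : MvPolynomial (Fin 3) ℂ) ^ 3 =
        (X 0) ^ 2 * (X 0 + X 1 + X 2) - X 0 * (X 0 * X 1 + X 0 * X 2 + X 1 * X 2)
          + X 0 * X 1 * X 2 := by ring
    rw [e]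
    exact add_mem (sub_mem (Ideal.mul_mem_left _ _ (Ideal.subset_span (by simp)))
      (Ideal.mul_mem_left _ _ (Ideal.subset_span (by simp))))
      (Ideal.subset_span (by simp))
  have hx3 : xbar ^ 3 = 0 := by
    rw [hxbar, ← map_pow, ← map_pow, Ideal.Quotient.eq_zero_iff_mem.mpr hX03, map_zero]
  set G : Polynomial ℂ ⧸ J →ₐ[ℂ] Mquot a b :=
    Ideal.Quotient.liftₐ J (Polynomial.aeval xbar) (by
      intro p hp
      rw [hJ, Ideal.mem_span_singleton] at hp
      obtain ⟨c, rfl⟩ := hp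
      rw [map_mul, map_pow, Polynomial.aeval_X, hx3]; exact zero_mul ((Polynomial.aeval xbar) c)) with hG
  have hG_mk : ∀ p, G (Ideal.Quotient.mk J p) = Polynomial.aeval xbar p := fun p => by
    rw [hG, Ideal.Quotient.liftₐ_apply]
    exact Ideal.Quotient.lift_mk _ _ _
  -- relations in Mquot
  have key0 : a • xbar + b • (mmk a b (cmk (X 1))) = 0 := by
    have hmem : (a • cmk (X 0) + b • cmk (X 1)) ∈
        Ideal.span {a • cmk (X 0) + b • cmk (X 1)} := Ideal.subset_span rfl
    have h0 := Ideal.Quotient.eq_zero_iff_mem.mpr hmem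
    calc a • xbar + b • (mmk a b (cmk (X 1)))
        = (Ideal.Quotient.mkₐ ℂ (Ideal.span {a • cmk (X 0) + b • cmk (X 1)}))
            (a • cmk (X 0) + b • cmk (X 1)) := by
          rw [map_add, map_smul, map_smul]; rfl
      _ = 0 := h0
  have hyx : mmk a b (cmk (X 1)) = t • xbar := by
    have hb' : b • (mmk a b (cmk (X 1))) = (b * t) • xbar := by
      have h1 : b • (mmk a b (cmk (X 1))) = -(a • xbar) := by
        rw [eq_neg_iff_add_eq_zero, add_comm]; exact key0
      rw [h1, ← neg_smul]
      congr 1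
      linear_combination -hbt
    calc mmk a b (cmk (X 1)) = b⁻¹ • (b • (mmk a b (cmk (X 1)))) := by
          rw [smul_smul, inv_mul_cancel₀ hb, one_smul]
      _ = b⁻¹ • ((b * t) • xbar) := by rw [hb']
      _ = t • xbar := by rw [smul_smul]; congr 1; field_simp
  have hsum : xbar + mmk a b (cmk (X 1)) + mmk a b (cmk (X 2)) = 0 := by
    have h0 : cmk (X 0 + X 1 + X 2) = 0 :=
      Ideal.Quotient.eq_zero_iff_mem.mpr (Ideal.subset_span (by simp))
    have : mmk a b (cmk (X 0 + X 1 + X 2)) = xbar + mmk a b (cmk (X 1)) + mmk a b (cmk (X 2)) := by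
      simp only [map_add]; rfl
    rw [← this, h0, map_zero]
  have hzx : mmk a b (cmk (X 2)) = (-(1 + t)) • xbar := by
    have h1 : mmk a b (cmk (X 2)) = -(xbar + mmk a b (cmk (X 1))) := by
      rw [eq_neg_iff_add_eq_zero, add_comm]
      exact hsum
    rw [h1, hyx]
    module
  have key' : ∀ q : MvPolynomial (Fin 3) ℂ, F q = Ideal.Quotient.mk J (F0 q) := fun q => rfl
  have m0' : F0 (X 0) = Polynomial.X := by simp [hF0]
  have hFG : F2.comp G = AlgHom.id ℂ _ := by
    apply Ideal.Quotient.algHom_ext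
    apply Polynomial.algHom_ext
    show F2 (G (Ideal.Quotient.mk J Polynomial.X)) = Ideal.Quotient.mk J Polynomial.X
    rw [hG_mk, Polynomial.aeval_X, hxbar, hF2_mk, hFlift_mk, key', m0']
  have key : ∀ q : MvPolynomial (Fin 3) ℂ, F q = Ideal.Quotient.mk J (F0 q) := fun q => rfl
  have m0 : F0 (X 0) = Polynomial.X := by simp [hF0]
  have m1 : F0 (X 1) = Polynomial.C t * Polynomial.X := by simp [hF0]
  have m2 : F0 (X 2) = Polynomial.C (-(1 + t)) * Polynomial.X := by simp [hF0]
  have hGF : G.comp F2 = AlgHom.id ℂ _ := by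
    apply Ideal.Quotient.algHom_ext
    apply Ideal.Quotient.algHom_ext
    apply MvPolynomial.algHom_ext
    intro i
    fin_cases i
    · show G (F2 (mmk a b (cmk (X 0)))) = mmk a b (cmk (X 0))
      rw [hF2_mk, hFlift_mk, key, hG_mk, m0, Polynomial.aeval_X]
    · show G (F2 (mmk a b (cmk (X 1)))) = mmk a b (cmk (X 1))
      rw [hF2_mk, hFlift_mk, key, hG_mk, m1, map_mul, Polynomial.aeval_C, Polynomial.aeval_X,
        ← Algebra.smul_def]
      exact hyx.symm
    · show G (F2 (mmk a b (cmk (X 2)))) = mmk a b (cmk (X 2))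
      rw [hF2_mk, hFlift_mk, key, hG_mk, m2, map_mul, Polynomial.aeval_C, Polynomial.aeval_X,
        ← Algebra.smul_def]
      exact hzx.symm
  refine ⟨AlgEquiv.ofAlgHom F2 G hFG hGF, ?_⟩
  show F2 (mmk a b (cmk (X 0))) = Ideal.Quotient.mk J Polynomial.X
  rw [hF2_mk, hFlift_mk, key', m0']
end

section
/- Let C = ℂ[x,y,z]/(x+y+z, xy+xz+yz, xyz) and let a, b ∈ ℂ satisfy a² − ab + b² = 0 with a ≠ 0, b ≠ 0. Then the image of xy in C/(ax+by) is nonzero, and the image of x² in C/(ax+by) is nonzero. -/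
open MvPolynomial

/-- If `a² − ab + b² = 0` with `a,b ≠ 0`, then the images of `xy` and of `x²`
in `C/(ax+by)` are nonzero. -/
theorem stmt_14 (a b : ℂ) (h : a ^ 2 - a * b + b ^ 2 = 0) (ha : a ≠ 0) (hb : b ≠ 0) :
    mmk a b (cmk (X 0 * X 1)) ≠ 0 ∧ mmk a b (cmk (X 0 ^ 2)) ≠ 0 := by
  obtain ⟨c, hcdef⟩ : ∃ c : ℂ, c = -a / b := ⟨-a / b, rfl⟩
  have hc0 : c ≠ 0 := by
    rw [hcdef]
    simp only [neg_div, ne_eq, neg_eq_zero, div_eq_zero_iff, not_or]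
    exact ⟨ha, hb⟩
  have hb2 : b ^ 2 ≠ 0 := pow_ne_zero 2 hb
  have hsum : 1 + c + c ^ 2 = 0 := by
    have hkey : (1 + c + c ^ 2) * b ^ 2 = 0 := by
      rw [hcdef]
      field_simp
      linear_combination h
    rcases mul_eq_zero.mp hkey with h1 | h1
    · exact h1
    · exact absurd h1 hb2
  have hc3 : c ^ 3 = 1 := by
    linear_combination (c - 1) * hsum
  have habc : a + b * c = 0 := by
    rw [hcdef]
    field_simp
    ring
  -- target ring ℂ[X]/(X³)
  set I : Ideal (Polynomial ℂ) := Ideal.span {Polynomial.X ^ 3} with hI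
  set π : Polynomial ℂ →ₐ[ℂ] (Polynomial ℂ ⧸ I) := Ideal.Quotient.mkₐ ℂ I with hπ
  set ev : MvPolynomial (Fin 3) ℂ →ₐ[ℂ] Polynomial ℂ :=
    aeval ![Polynomial.X, Polynomial.C c * Polynomial.X,
      Polynomial.C (c ^ 2) * Polynomial.X] with hev
  set φ : MvPolynomial (Fin 3) ℂ →ₐ[ℂ] (Polynomial ℂ ⧸ I) := π.comp ev with hφ
  have hX3 : π (Polynomial.X ^ 3) = 0 := by
    rw [hπ, Ideal.Quotient.mkₐ_eq_mk, Ideal.Quotient.eq_zero_iff_mem, hI]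
    exact Ideal.mem_span_singleton_self _
  have hg1 : φ (X 0 + X 1 + X 2) = 0 := by
    rw [hφ, AlgHom.comp_apply]
    have h1 : ev (X 0 + X 1 + X 2) = Polynomial.C (1 + c + c ^ 2) * Polynomial.X := by
      simp only [hev, map_add, map_mul, map_one, map_pow, aeval_X,
        Matrix.cons_val_zero, Matrix.cons_val_one, Matrix.head_cons,
        Matrix.cons_val_two, Matrix.tail_cons]
      ring
    rw [h1, hsum]
    simp
  have hg2 : φ (X 0 * X 1 + X 0 * X 2 + X 1 * X 2) = 0 := by
    rw [hφ, AlgHom.comp_apply]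
    have h1 : ev (X 0 * X 1 + X 0 * X 2 + X 1 * X 2) =
        Polynomial.C (c * (1 + c + c ^ 2)) * Polynomial.X ^ 2 := by
      simp only [hev, map_add, map_mul, map_one, map_pow, aeval_X,
        Matrix.cons_val_zero, Matrix.cons_val_one, Matrix.head_cons,
        Matrix.cons_val_two, Matrix.tail_cons]
      ring
    rw [h1, hsum, mul_zero]
    simp
  have hg3 : φ (X 0 * X 1 * X 2) = 0 := by
    rw [hφ, AlgHom.comp_apply]
    have h1 : ev (X 0 * X 1 * X 2) = Polynomial.C (c ^ 3) * Polynomial.X ^ 3 := by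
      simp only [hev, map_add, map_mul, map_one, map_pow, aeval_X,
        Matrix.cons_val_zero, Matrix.cons_val_one, Matrix.head_cons,
        Matrix.cons_val_two, Matrix.tail_cons]
      ring
    rw [h1, hc3, map_one, one_mul, hX3]
  have hker : ∀ p ∈ coinvIdeal, φ p = 0 := by
    have hle : coinvIdeal ≤
        RingHom.ker (φ : MvPolynomial (Fin 3) ℂ →+* (Polynomial ℂ ⧸ I)) := by
      rw [Ideal.span_le]
      rintro q (rfl | rfl | rfl)
      · simpa only [SetLike.mem_coe, RingHom.mem_ker, AlgHom.coe_toRingHom] using hg1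
      · simpa only [SetLike.mem_coe, RingHom.mem_ker, AlgHom.coe_toRingHom] using hg2
      · simpa only [SetLike.mem_coe, RingHom.mem_ker, AlgHom.coe_toRingHom] using hg3
    intro p hp
    exact hle hp
  set φ₁ : Coinv →ₐ[ℂ] (Polynomial ℂ ⧸ I) :=
    Ideal.Quotient.liftₐ coinvIdeal φ hker with hφ₁
  have hφ₁mk : ∀ p : MvPolynomial (Fin 3) ℂ, φ₁ (cmk p) = φ p := fun p =>
    Ideal.Quotient.liftₐ_apply coinvIdeal φ hker (cmk p)
  have hgen : ∀ x ∈ Ideal.span {a • cmk (X 0) + b • cmk (X 1)}, φ₁ x = 0 := by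
    intro x hx
    rw [Ideal.mem_span_singleton] at hx
    obtain ⟨y, rfl⟩ := hx
    rw [map_mul]
    have e0 : φ (X 0) = π Polynomial.X := by
      rw [hφ, AlgHom.comp_apply]
      congr 1
      simp [hev]
    have e1 : φ (X 1) = π (Polynomial.C c * Polynomial.X) := by
      rw [hφ, AlgHom.comp_apply]
      congr 1
      simp [hev]
    have h1 : φ₁ (a • cmk (X 0) + b • cmk (X 1)) = 0 := by
      rw [map_add, map_smul, map_smul, hφ₁mk, hφ₁mk, e0, e1,
        ← map_smul π, ← map_smul π, ← map_add π]
      have h2 : a • Polynomial.X + b • (Polynomial.C c * Polynomial.X) =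
          Polynomial.C (a + b * c) * Polynomial.X := by
        rw [Polynomial.smul_eq_C_mul, Polynomial.smul_eq_C_mul, map_add, map_mul]
        ring
      rw [h2, habc, map_zero, zero_mul, map_zero]
    rw [h1, zero_mul]
  set φ₂ : Mquot a b →ₐ[ℂ] (Polynomial ℂ ⧸ I) :=
    Ideal.Quotient.liftₐ _ φ₁ hgen with hφ₂
  have hφ₂mk : ∀ p : MvPolynomial (Fin 3) ℂ, φ₂ (mmk a b (cmk p)) = φ p := by
    intro p
    rw [show φ₂ (mmk a b (cmk p)) = φ₁ (cmk p) from
      Ideal.Quotient.liftₐ_apply _ φ₁ hgen (mmk a b (cmk p)), hφ₁mk]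
  have hnz : ∀ d : ℂ, d ≠ 0 → π (Polynomial.C d * Polynomial.X ^ 2) ≠ 0 := by
    intro d hd hzero
    rw [hπ, Ideal.Quotient.mkₐ_eq_mk, Ideal.Quotient.eq_zero_iff_mem, hI,
      Ideal.mem_span_singleton] at hzero
    have hne : Polynomial.C d * Polynomial.X ^ 2 ≠ (0 : Polynomial ℂ) :=
      mul_ne_zero (Polynomial.C_ne_zero.mpr hd) (pow_ne_zero 2 Polynomial.X_ne_zero)
    have hdeg := Polynomial.natDegree_le_of_dvd hzero hne
    rw [Polynomial.natDegree_X_pow] at hdeg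
    have h2 : (Polynomial.C d * Polynomial.X ^ 2 : Polynomial ℂ).natDegree = 2 := by
      rw [Polynomial.natDegree_C_mul hd, Polynomial.natDegree_X_pow]
    omega
  constructor
  · intro hzero
    apply hnz c hc0
    have hval : φ (X 0 * X 1) = π (Polynomial.C c * Polynomial.X ^ 2) := by
      rw [hφ, AlgHom.comp_apply]
      congr 1
      simp only [hev, map_mul, aeval_X]
      simp only [Matrix.cons_val_zero, Matrix.cons_val_one, Matrix.head_cons]
      ring
    rw [← hval, ← hφ₂mk, hzero, map_zero]
  · intro hzero
    apply hnz 1 one_ne_zero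
    have hval : φ (X 0 ^ 2) = π (Polynomial.C 1 * Polynomial.X ^ 2) := by
      rw [hφ, AlgHom.comp_apply]
      congr 1
      simp only [hev, map_pow, aeval_X]
      simp only [Matrix.cons_val_zero, map_one, one_mul]
    rw [← hval, ← hφ₂mk, hzero, map_zero]
end
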